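/- arXiv:1210.7714 — 3 statements merged into one kernel-verified Lean document; each statement's English description precedes it below -/
import Mathlib

section
/- Let n > 0 be a real number, k a positive integer, and let μ₁ ≤ μ₂ ≤ ⋯ ≤ μ_{k+1} be positive real numbers such that for every integer j with 1 ≤ j ≤ k one has ∑_{i=1}^{j} (μ_{j+1} − μᵢ)² ≤ (4/n) ∑_{i=1}^{j} μᵢ (μ_{j+1} − μᵢ). Then μ_{k+1} ≤ (1 + 4/n) · k^{2/n} · μ₁. -/
-- Lemma 1: tanh-type bound
lemma cy_sinh_le (x : ℝ) (hx : 0 ≤ x) : Real.sinh x ≤ x * Real.cosh x := by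
  have key : ∀ t : ℝ, HasDerivAt (fun t => t * Real.cosh t - Real.sinh t)
      (t * Real.sinh t) t := by
    intro t
    have h1 : HasDerivAt (fun t : ℝ => t * Real.cosh t)
        (1 * Real.cosh t + t * Real.sinh t) t :=
      (hasDerivAt_id t).mul (Real.hasDerivAt_cosh t)
    have h2 := h1.sub (Real.hasDerivAt_sinh t)
    rw [show t * Real.sinh t = 1 * Real.cosh t + t * Real.sinh t - Real.cosh t by ring]
    exact h2
  have hmono : Monotone (fun t : ℝ => t * Real.cosh t - Real.sinh t) := by
    apply monotone_of_deriv_nonneg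
    · exact fun t => ((key t).differentiableAt)
    · intro t
      rw [(key t).deriv]
      rcases le_or_gt 0 t with h | h
      · exact mul_nonneg h (Real.sinh_nonneg_iff.2 h)
      · exact mul_nonneg_of_nonpos_of_nonpos h.le (Real.sinh_nonpos_iff.2 h.le)
  have h0 := hmono hx
  simp at h0
  linarith

-- Lemma 2: sinh(c*b) ≥ c*sinh(b)
lemma cy_sinh_mul (b c : ℝ) (hb : 0 ≤ b) (hc : 1 ≤ c) :
    c * Real.sinh b ≤ Real.sinh (c * b) := by
  have hd : c * b = b + (c - 1) * b := by ring
  rw [hd, Real.sinh_add]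
  have h1 : 0 ≤ (c - 1) * b := mul_nonneg (by linarith) hb
  have h2 := Real.one_le_cosh ((c - 1) * b)
  have h3 : (c - 1) * b ≤ Real.sinh ((c - 1) * b) := Real.self_le_sinh_iff.2 h1
  have h4 := cy_sinh_le b hb
  have h5 : 0 ≤ Real.sinh b := Real.sinh_nonneg_iff.2 hb
  have h6 : 0 < Real.cosh b := Real.cosh_pos b
  nlinarith [mul_nonneg h5 (sub_nonneg.2 h2), mul_le_mul_of_nonneg_left h3 h6.le,
    mul_le_mul_of_nonneg_left h4 (by linarith : (0:ℝ) ≤ c - 1)]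
-- Lemma 3: the key power inequality
lemma cy_pow (K a : ℝ) (hK : 0 < K) (ha : 0 ≤ a) :
    (1 + 2*a) * (1 + 1/K) ^ a + K ≤ (K + 1) * ((1 + 1/K) ^ a) ^ 2 := by
  have hKpos : (0:ℝ) < 1 + 1/K := by positivity
  have hK1 : (1:ℝ) < 1 + 1/K := by
    have : 0 < 1/K := by positivity
    linarith
  set L := Real.log (1 + 1/K) with hLdef
  have hL : 0 < L := Real.log_pos hK1
  have hu : Real.exp L = 1 + 1/K := Real.exp_log hKpos
  have hv : (1 + 1/K) ^ a = Real.exp (a * L) := by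
    rw [Real.rpow_def_of_pos hKpos, mul_comm]
  set A := (2*a+1) * (L/2) with hAdef
  have h3 : (2*a+1) * Real.sinh (L/2) ≤ Real.sinh A :=
    cy_sinh_mul (L/2) (2*a+1) (by linarith) (by linarith)
  have key : ∀ x y : ℝ, Real.exp y * (2 * Real.sinh x)
      = Real.exp (y + x) - Real.exp (y - x) := by
    intro x y
    rw [Real.sinh_eq, Real.exp_add, Real.exp_sub, Real.exp_neg]
    have := Real.exp_pos x
    field_simp
  have h7 : (2*a+1) * (Real.exp (A + L/2) - Real.exp (A - L/2))
      ≤ Real.exp (A + A) - Real.exp (A - A) := by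
    rw [← key (L/2) A, ← key A A]
    nlinarith [mul_le_mul_of_nonneg_left h3 (by positivity : (0:ℝ) ≤ 2 * Real.exp A)]
  have e1 : Real.exp (A + L/2) = Real.exp L * Real.exp (a*L) := by
    rw [← Real.exp_add]; congr 1; rw [hAdef]; ring
  have e2 : Real.exp (A - L/2) = Real.exp (a*L) := by
    congr 1; rw [hAdef]; ring
  have e3 : Real.exp (A + A) = Real.exp (a*L) * Real.exp (a*L) * Real.exp L := by
    rw [← Real.exp_add, ← Real.exp_add]; congr 1; rw [hAdef]; ring
  have e4 : Real.exp (A - A) = 1 := by rw [sub_self, Real.exp_zero]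
  rw [e1, e2, e3, e4, hu] at h7
  rw [hv]
  set v := Real.exp (a*L) with hvdef
  -- h7 : (2a+1)*((1+1/K)*v - v) ≤ v*v*(1+1/K) - 1
  have hKne : K ≠ 0 := ne_of_gt hK
  have h8 := mul_le_mul_of_nonneg_left h7 hK.le
  field_simp at h8
  nlinarith [h8]

-- recursion step
lemma cy_step (a j S Q Λ w : ℝ) (ha : 0 < a) (hj : 1 ≤ j) (hw : 1 ≤ w)
    (hL : (1 + 2*a) * w + j ≤ (j + 1) * w ^ 2)
    (h1 : j * Λ ^ 2 - 2 * (1 + a) * S * Λ + (1 + 2*a) * Q ≤ 0) :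
    (1 + a) * ((S + Λ) / (j + 1)) ^ 2 - (Q + Λ ^ 2) / (j + 1)
      ≤ w ^ 2 * ((1 + a) * (S / j) ^ 2 - Q / j) := by
  have hj0 : (0:ℝ) < j := by linarith
  have hw0 : (0:ℝ) < w := by linarith
  set s := 1 + 2*a with hs
  have hs0 : (0:ℝ) < s := by simp [hs]; linarith
  set u := (j + 1) * w ^ 2 - j with hu
  have husw : s * w ≤ u := by nlinarith [hL]
  have hsw0 : 0 < s * w := mul_pos hs0 hw0
  have hu0 : 0 < u := lt_of_lt_of_le hsw0 husw
  set c := (j + 1) * u with hc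
  have hc0 : 0 < c := mul_pos (by linarith) hu0
  set X := j * Λ - (1 + a) * S with hX
  set R := -(j * (j * Λ ^ 2 - 2 * (1 + a) * S * Λ + s * Q)) with hR
  have hR0 : 0 ≤ R := by
    rw [hR]
    have := mul_nonpos_of_nonneg_of_nonpos hj0.le h1
    linarith [this]
  set A := c + s * (j - a) with hA
  set B := s * a * (1 + a) * S with hB
  set C := a * (1 + a) * (c - s * (j + a + 1)) * S ^ 2 with hC
  -- A > 0
  have hjw : 1 + 2*a ≤ (j + 1) * w := by nlinarith [hL, hw0]
  have hA0 : 0 < A := by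
    have h2 : (j + 1) * (s * w) ≤ (j + 1) * u :=
      mul_le_mul_of_nonneg_left husw (by linarith)
    have h3 : s * (1 + 2*a) ≤ s * ((j + 1) * w) :=
      mul_le_mul_of_nonneg_left hjw hs0.le
    rw [hA, hc]
    nlinarith [h2, h3, hs0, ha, hj]
  -- discriminant
  have hdisc : B ^ 2 ≤ A * C := by
    have hid : A * C - B ^ 2
        = a * (1 + a) * S ^ 2 * ((j + 1) ^ 2 * ((u - s * w) * (u + s * w))) := by
      rw [hA, hB, hC, hc, hs]; ring
    have hnn : 0 ≤ a * (1 + a) * S ^ 2 * ((j + 1) ^ 2 * ((u - s * w) * (u + s * w))) := by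
      have := sub_nonneg.2 husw
      have : (0:ℝ) ≤ (u - s * w) * (u + s * w) :=
        mul_nonneg this (by linarith)
      positivity
    linarith [hid, hnn]
  -- quadratic nonneg
  have hquad : 0 ≤ A * X ^ 2 - 2 * B * X + C := by
    have h9 : 0 ≤ A * (A * X ^ 2 - 2 * B * X + C) := by
      have : A * (A * X ^ 2 - 2 * B * X + C) = (A * X - B) ^ 2 + (A * C - B ^ 2) := by
        ring
      rw [this]
      have := sq_nonneg (A * X - B)
      linarith [hdisc]
    exact nonneg_of_mul_nonneg_right h9 hA0
  have key : 0 ≤ c * R + (A * X ^ 2 - 2 * B * X + C) :=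
    add_nonneg (mul_nonneg hc0.le hR0) hquad
  have hid2 : s * (j + 1) ^ 2 * j ^ 2 *
      (w ^ 2 * ((1 + a) * (S / j) ^ 2 - Q / j)
        - ((1 + a) * ((S + Λ) / (j + 1)) ^ 2 - (Q + Λ ^ 2) / (j + 1)))
      = c * R + (A * X ^ 2 - 2 * B * X + C) := by
    rw [hA, hB, hC, hc, hX, hR, hu, hs]
    field_simp
    ring
  have hM : 0 < s * (j + 1) ^ 2 * j ^ 2 := by positivity
  rw [← hid2] at key
  have := nonneg_of_mul_nonneg_right key hM
  linarith

/-- **Cheng–Yang recursion formula.** If `0 < n` and `μ₁ ≤ ⋯ ≤ μ_{k+1}` are positive reals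
satisfying, for every `1 ≤ j ≤ k`,
`∑_{i=1}^{j} (μ_{j+1} − μᵢ)² ≤ (4/n) ∑_{i=1}^{j} μᵢ (μ_{j+1} − μᵢ)`,
then `μ_{k+1} ≤ (1 + 4/n) k^{2/n} μ₁`. -/
theorem chengYang_recursion (n : ℝ) (hn : 0 < n) (k : ℕ) (hk : 0 < k)
    (μ : ℕ → ℝ)
    (hpos : ∀ i, 1 ≤ i → i ≤ k + 1 → 0 < μ i)
    (hmono : ∀ i j, 1 ≤ i → i ≤ j → j ≤ k + 1 → μ i ≤ μ j)
    (hrec : ∀ j, 1 ≤ j → j ≤ k →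
      ∑ i ∈ Finset.Icc 1 j, (μ (j + 1) - μ i) ^ 2 ≤
        (4 / n) * ∑ i ∈ Finset.Icc 1 j, μ i * (μ (j + 1) - μ i)) :
    μ (k + 1) ≤ (1 + 4 / n) * (k : ℝ) ^ ((2 : ℝ) / n) * μ 1 := by
  set a := 2 / n with ha_def
  have ha : 0 < a := by positivity
  -- normalized recursion hypothesis
  have hrec' : ∀ j : ℕ, 1 ≤ j → j ≤ k →
      (j:ℝ) * μ (j+1) ^ 2 - 2 * (1 + a) * (∑ i ∈ Finset.Icc 1 j, μ i) * μ (j+1)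
        + (1 + 2*a) * (∑ i ∈ Finset.Icc 1 j, μ i ^ 2) ≤ 0 := by
    intro j hj1 hjk
    have h := hrec j hj1 hjk
    have hcard : (Finset.Icc 1 j).card = j := by rw [Nat.card_Icc]; omega
    have e1 : ∑ i ∈ Finset.Icc 1 j, (μ (j+1) - μ i) ^ 2
        = (j:ℝ) * μ (j+1) ^ 2 - 2 * μ (j+1) * (∑ i ∈ Finset.Icc 1 j, μ i)
          + (∑ i ∈ Finset.Icc 1 j, μ i ^ 2) := by
      rw [Finset.sum_congr rfl (fun i _ => by ring :
        ∀ i ∈ Finset.Icc 1 j, (μ (j+1) - μ i) ^ 2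
          = μ (j+1) ^ 2 - 2 * μ (j+1) * μ i + μ i ^ 2)]
      rw [Finset.sum_add_distrib, Finset.sum_sub_distrib, ← Finset.mul_sum,
        Finset.sum_const, hcard, nsmul_eq_mul]
    have e2 : ∑ i ∈ Finset.Icc 1 j, μ i * (μ (j+1) - μ i)
        = μ (j+1) * (∑ i ∈ Finset.Icc 1 j, μ i) - (∑ i ∈ Finset.Icc 1 j, μ i ^ 2) := by
      rw [Finset.sum_congr rfl (fun i _ => by ring :
        ∀ i ∈ Finset.Icc 1 j, μ i * (μ (j+1) - μ i)
          = μ (j+1) * μ i - μ i ^ 2)]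
      rw [Finset.sum_sub_distrib, ← Finset.mul_sum]
    rw [e1, e2] at h
    have h4n : 4 / n = 2 * a := by rw [ha_def]; ring
    rw [h4n] at h
    nlinarith [h]
  -- main induction
  have claim : ∀ j : ℕ, 1 ≤ j → j ≤ k →
      (1 + a) * ((∑ i ∈ Finset.Icc 1 j, μ i) / j) ^ 2
        - (∑ i ∈ Finset.Icc 1 j, μ i ^ 2) / j
      ≤ a * (j:ℝ) ^ (2*a) * μ 1 ^ 2 := by
    intro j hj1
    induction j, hj1 using Nat.le_induction with
    | base =>
      intro _
      simp [Finset.Icc_self, Real.one_rpow]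
      nlinarith [sq_nonneg (μ 1)]
    | succ m hm ih =>
      intro hmk
      have hmk' : m ≤ k := by omega
      have ihm := ih hmk'
      have hm1 : (1:ℝ) ≤ (m:ℝ) := by exact_mod_cast hm
      have hm0 : (0:ℝ) < m := by linarith
      set w := ((1:ℝ) + 1/(m:ℝ)) ^ a with hw_def
      have hw : 1 ≤ w := by
        rw [hw_def]
        calc (1:ℝ) = (1:ℝ) ^ a := (Real.one_rpow a).symm
        _ ≤ (1 + 1/(m:ℝ)) ^ a := by
            have h01 : (0:ℝ) < 1/(m:ℝ) := by positivity
            exact Real.rpow_le_rpow (by norm_num) (by linarith) ha.le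
      have hL := cy_pow (m:ℝ) a hm0 ha.le
      have hstep := cy_step a (m:ℝ) (∑ i ∈ Finset.Icc 1 m, μ i)
        (∑ i ∈ Finset.Icc 1 m, μ i ^ 2) (μ (m+1)) w ha hm1 hw
        (by rw [hw_def]; linarith [hL]) (hrec' m hm hmk')
      have hsum1 : ∑ i ∈ Finset.Icc 1 (m+1), μ i
          = (∑ i ∈ Finset.Icc 1 m, μ i) + μ (m+1) :=
        Finset.sum_Icc_succ_top (by omega) μ
      have hsum2 : ∑ i ∈ Finset.Icc 1 (m+1), μ i ^ 2
          = (∑ i ∈ Finset.Icc 1 m, μ i ^ 2) + μ (m+1) ^ 2 :=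
        Finset.sum_Icc_succ_top (by omega) _
      rw [hsum1, hsum2]
      push_cast
      calc (1 + a) * (((∑ i ∈ Finset.Icc 1 m, μ i) + μ (m+1)) / ((m:ℝ) + 1)) ^ 2
          - ((∑ i ∈ Finset.Icc 1 m, μ i ^ 2) + μ (m+1) ^ 2) / ((m:ℝ) + 1)
          ≤ w ^ 2 * ((1 + a) * ((∑ i ∈ Finset.Icc 1 m, μ i) / (m:ℝ)) ^ 2
            - (∑ i ∈ Finset.Icc 1 m, μ i ^ 2) / (m:ℝ)) := hstep
        _ ≤ w ^ 2 * (a * (m:ℝ) ^ (2*a) * μ 1 ^ 2) :=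
            mul_le_mul_of_nonneg_left ihm (sq_nonneg w)
        _ = a * ((m:ℝ) + 1) ^ (2*a) * μ 1 ^ 2 := by
            have hbase : (1:ℝ) + 1/(m:ℝ) = ((m:ℝ)+1)/(m:ℝ) := by field_simp
            have hww : w ^ 2 = (((m:ℝ)+1) / (m:ℝ)) ^ (2*a) := by
              rw [hw_def, hbase, ← Real.rpow_natCast (((((m:ℝ)+1)/(m:ℝ))) ^ a) 2,
                ← Real.rpow_mul (by positivity : (0:ℝ) ≤ ((m:ℝ)+1)/(m:ℝ))]
              congr 1
              norm_num
              ring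
            rw [hww, Real.div_rpow (by positivity) hm0.le]
            field_simp
  -- conclude
  have hk1 : (1:ℝ) ≤ (k:ℝ) := by exact_mod_cast hk
  have hk0 : (0:ℝ) < (k:ℝ) := by linarith
  have hclaim := claim k hk le_rfl
  have h1 := hrec' k hk le_rfl
  set S := ∑ i ∈ Finset.Icc 1 k, μ i with hS
  set Q := ∑ i ∈ Finset.Icc 1 k, μ i ^ 2 with hQ
  set Λ := μ (k+1) with hΛ
  have hT : Λ ^ 2 - 2 * (1 + a) * (S / k) * Λ + (1 + 2*a) * (Q / k) ≤ 0 := by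
    have he : Λ ^ 2 - 2 * (1 + a) * (S / k) * Λ + (1 + 2*a) * (Q / k)
        = (1 / (k:ℝ)) * ((k:ℝ) * Λ ^ 2 - 2 * (1 + a) * S * Λ + (1 + 2*a) * Q) := by
      field_simp
    rw [he]
    exact mul_nonpos_of_nonneg_of_nonpos (by positivity) h1
  have hkey : a * Λ ^ 2 ≤ (1 + 2*a) ^ 2 * ((1 + a) * (S / k) ^ 2 - Q / k) := by
    nlinarith [hT, sq_nonneg (Λ - (1 + 2*a) * (S / k))]
  have hfin : a * Λ ^ 2 ≤ (1 + 2*a) ^ 2 * (a * (k:ℝ) ^ (2*a) * μ 1 ^ 2) := by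
    calc a * Λ ^ 2 ≤ (1 + 2*a) ^ 2 * ((1 + a) * (S / k) ^ 2 - Q / k) := hkey
      _ ≤ (1 + 2*a) ^ 2 * (a * (k:ℝ) ^ (2*a) * μ 1 ^ 2) :=
          mul_le_mul_of_nonneg_left hclaim (by positivity)
  have hsq : Λ ^ 2 ≤ ((1 + 2*a) * (k:ℝ) ^ a * μ 1) ^ 2 := by
    have hk2a : (k:ℝ) ^ (2*a) = ((k:ℝ) ^ a) ^ 2 := by
      rw [← Real.rpow_natCast ((k:ℝ) ^ a) 2, ← Real.rpow_mul hk0.le]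
      congr 1
      norm_num
      ring
    rw [hk2a] at hfin
    have := (mul_le_mul_iff_of_pos_left ha).mp (by linarith [hfin] :
      a * Λ ^ 2 ≤ a * ((1 + 2*a) ^ 2 * (((k:ℝ) ^ a) ^ 2 * μ 1 ^ 2)))
    nlinarith [this]
  have hΛpos : 0 < Λ := hpos (k+1) (by omega) le_rfl
  have hRpos : 0 < (1 + 2*a) * (k:ℝ) ^ a * μ 1 := by
    have := hpos 1 le_rfl (by omega)
    have : 0 < (k:ℝ) ^ a := Real.rpow_pos_of_pos hk0 a
    positivity
  have hfinal : Λ ≤ (1 + 2*a) * (k:ℝ) ^ a * μ 1 := by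
    nlinarith [hsq, hΛpos, hRpos]
  calc μ (k+1) = Λ := rfl
    _ ≤ (1 + 2*a) * (k:ℝ) ^ a * μ 1 := hfinal
    _ = (1 + 4 / n) * (k:ℝ) ^ ((2:ℝ) / n) * μ 1 := by
        rw [ha_def]; ring_nf
end

section
/- Let m be a positive integer and set c_m := 2m(m+1). Let (λ_i)_{i ≥ 1} be a nondecreasing sequence of nonnegative real numbers with λ₁ = 0, and suppose that for every positive integer j one has ∑_{i=1}^{j} (λ_{j+1} − λᵢ)² ≤ (2/m) ∑_{i=1}^{j} (λ_{j+1} − λᵢ)(λᵢ + c_m). Then for every positive integer k, λ_{k+1} ≤ 2(m+1)(m+2) · k^{1/m} − 2m(m+1). -/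
open Finset Real

lemma pade_exp {y : ℝ} (h0 : 0 ≤ y) (h1 : y ≤ 1) : Real.exp y ≤ (2 + y) / (2 - y) := by
  have h2 : (0:ℝ) < 2 - y := by linarith
  have hb := Real.exp_bound' h0 h1 (n := 4) (by norm_num)
  rw [le_div_iff₀ h2]
  have hs : (∑ m ∈ Finset.range 4, y ^ m / m.factorial) = 1 + y + y^2/2 + y^3/6 := by
    simp [Finset.sum_range_succ, Nat.factorial]
  rw [hs] at hb
  norm_num [Nat.factorial] at hb
  nlinarith [pow_nonneg h0 3, pow_nonneg h0 4, pow_nonneg h0 5]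

lemma log_midpoint {t : ℝ} (ht : 1 ≤ t) : 2 / (2*t+1) ≤ Real.log ((t+1)/t) := by
  have ht0 : (0:ℝ) < t := by linarith
  have hpos : (0:ℝ) < (t+1)/t := by positivity
  rw [Real.le_log_iff_exp_le hpos]
  have hy0 : (0:ℝ) ≤ 2/(2*t+1) := by positivity
  have hy1 : 2/(2*t+1) ≤ 1 := by
    rw [div_le_one (by linarith)]; linarith
  calc Real.exp (2/(2*t+1)) ≤ (2 + 2/(2*t+1))/(2 - 2/(2*t+1)) := pade_exp hy0 hy1
    _ = (t+1)/t := by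
        rw [div_eq_div_iff (ne_of_gt (by linarith : (0:ℝ) < 2 - 2/(2*t+1))) (ne_of_gt ht0)]
        · field_simp
          ring

lemma cubic_le_exp {y : ℝ} (h0 : 0 ≤ y) : 1 + y + y^2/2 + y^3/6 ≤ Real.exp y := by
  have h := Real.sum_le_exp_of_nonneg h0 4
  have hs : (∑ m ∈ Finset.range 4, y ^ m / m.factorial) = 1 + y + y^2/2 + y^3/6 := by
    simp [Finset.sum_range_succ, Nat.factorial]
  linarith [hs ▸ h]

lemma master_scalar {k p : ℝ} (hk : 1 ≤ k) (hp : 0 < p) :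
    k*(k+1) + (1+2*p)*((1+2*p) + Real.sqrt ((2*k+1)^2 + 4*(p+p^2)))/2
      ≤ (k+1)^2 * ((k+1)/k)^(2*p) := by
  have hk0 : (0:ℝ) < k := by linarith
  have hX : (0:ℝ) < 2*k+1 := by linarith
  set y : ℝ := 4*p/(2*k+1) with hy
  have hy0 : 0 ≤ y := by positivity
  -- sqrt bound
  have hR : Real.sqrt ((2*k+1)^2 + 4*(p+p^2)) ≤ (2*k+1) + 2*(p+p^2)/(2*k+1) := by
    have hB : (0:ℝ) ≤ (2*k+1) + 2*(p+p^2)/(2*k+1) := by positivity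
    have h1 : (2*k+1)^2 + 4*(p+p^2) ≤ ((2*k+1) + 2*(p+p^2)/(2*k+1))^2 := by
      have h2 : ((2*k+1) + 2*(p+p^2)/(2*k+1))^2
          = (2*k+1)^2 + 4*(p+p^2) + (2*(p+p^2)/(2*k+1))^2 := by
        field_simp
        ring
      nlinarith [sq_nonneg (2*(p+p^2)/(2*k+1))]
    calc Real.sqrt ((2*k+1)^2 + 4*(p+p^2)) ≤ Real.sqrt (((2*k+1) + 2*(p+p^2)/(2*k+1))^2) :=
          Real.sqrt_le_sqrt h1
      _ = (2*k+1) + 2*(p+p^2)/(2*k+1) := Real.sqrt_sq hB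
  -- rpow lower bound
  have hE : 1 + y + y^2/2 + y^3/6 ≤ ((k+1)/k)^(2*p) := by
    have hb : (0:ℝ) < (k+1)/k := by positivity
    rw [Real.rpow_def_of_pos hb, mul_comm]
    refine (cubic_le_exp hy0).trans (Real.exp_le_exp.2 ?_)
    have hlog := log_midpoint hk
    calc y = (2*p) * (2/(2*k+1)) := by rw [hy]; ring
      _ ≤ (2*p) * Real.log ((k+1)/k) := by
          apply mul_le_mul_of_nonneg_left hlog (by linarith)
  -- polynomial part
  have hpoly : k*(k+1) + (1+2*p)*((1+2*p) + ((2*k+1) + 2*(p+p^2)/(2*k+1)))/2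
      ≤ (k+1)^2 * (1 + y + y^2/2 + y^3/6) := by
    rw [← sub_nonneg]
    have hid : (k+1)^2 * (1 + y + y^2/2 + y^3/6)
        - (k*(k+1) + (1+2*p)*((1+2*p) + ((2*k+1) + 2*(p+p^2)/(2*k+1)))/2)
        = (p^2*((24*k^2+48*k+18) + p*(16*k^2+80*k+52))) / (6*(2*k+1)^3) := by
      rw [hy]
      field_simp
      ring
    rw [hid]
    positivity
  have hE' : (k+1)^2 * (1 + y + y^2/2 + y^3/6) ≤ (k+1)^2 * ((k+1)/k)^(2*p) :=
    mul_le_mul_of_nonneg_left hE (by positivity)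
  have hLHS : k*(k+1) + (1+2*p)*((1+2*p) + Real.sqrt ((2*k+1)^2 + 4*(p+p^2)))/2
      ≤ k*(k+1) + (1+2*p)*((1+2*p) + ((2*k+1) + 2*(p+p^2)/(2*k+1)))/2 := by
    have : (0:ℝ) ≤ 1+2*p := by linarith
    nlinarith [hR]
  linarith

-- F positivity etc.
-- F positivity from the quadratic inequality
lemma F_pos {p Λ T μ' : ℝ} (hp : 0 < p) (hΛ : 0 < Λ)
    (hQ : μ'^2 - 2*(1+p)*μ'*Λ + (1+2*p)*T ≤ 0) :
    0 < (1+p)*Λ^2 - T := by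
  nlinarith [sq_nonneg (μ' - (1+p)*Λ), mul_pos (mul_pos hp (by linarith : (0:ℝ) < 1+p)) (mul_pos hΛ hΛ)]

lemma recursion_step {p J Λ T μ' F' : ℝ} (hJ : 1 ≤ J) (hp : 0 < p) (hΛ : 0 < Λ)
    (hQ : μ'^2 - 2*(1+p)*μ'*Λ + (1+2*p)*T ≤ 0)
    (hF' : F' = (1+p)*((J*Λ+μ')/(J+1))^2 - (J*T+μ'^2)/(J+1)) :
    F' ≤ ((J+1)/J)^(2*p) * ((1+p)*Λ^2 - T) := by
  have hJ0 : (0:ℝ) < J := by linarith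
  have hJ1 : (0:ℝ) < J + 1 := by linarith
  set q : ℝ := p + p^2 with hq
  have hq0 : 0 < q := by positivity
  set F : ℝ := (1+p)*Λ^2 - T with hF
  have hF0 : 0 < F := F_pos hp hΛ hQ
  set s : ℝ := μ' - (1+p)*Λ with hs
  -- disk constraint
  have hdisk : q*Λ^2 + s^2 ≤ (1+2*p)*F := by
    have : q*Λ^2 + s^2 - (1+2*p)*F = μ'^2 - 2*(1+p)*μ'*Λ + (1+2*p)*T := by
      rw [hs, hq, hF]; ring
    linarith
  -- spectral data
  set R : ℝ := Real.sqrt ((2*J+1)^2 + 4*q) with hR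
  have hR2 : R^2 = (2*J+1)^2 + 4*q := Real.sq_sqrt (by positivity)
  have hRX : 2*J+1 ≤ R := by
    rw [hR]
    calc 2*J+1 = Real.sqrt ((2*J+1)^2) := (Real.sqrt_sq (by linarith)).symm
      _ ≤ _ := Real.sqrt_le_sqrt (by nlinarith)
  set lam' : ℝ := ((1+2*p) + R)/2 with hlam'
  have he0 : 0 ≤ lam' - (J+1+p) := by rw [hlam']; linarith
  have hf0 : 0 < lam' + J - p := by rw [hlam']; nlinarith
  have hef : (lam' - (J+1+p)) * (lam' + J - p) = q := by
    have : (lam' - (J+1+p)) * (lam' + J - p) = (R^2 - (2*J+1)^2)/4 + ((1+2*p)-(1+2*p))*R/4 := by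
      rw [hlam']; ring
    rw [this, hR2]; ring
  -- pointwise quadratic form bound
  have hpoint : (J+1+p)*(q*Λ^2) + 2*q*Λ*s - (J-p)*s^2 ≤ lam' * (q*Λ^2 + s^2) := by
    rw [← sub_nonneg]
    have h2 : (lam' + J - p) * (lam' * (q*Λ^2 + s^2) - ((J+1+p)*(q*Λ^2) + 2*q*Λ*s - (J-p)*s^2))
        = (q*Λ - (lam' + J - p)*s)^2 := by
      linear_combination (q*Λ^2) * hef
    have h3 : 0 ≤ (lam' + J - p) * (lam' * (q*Λ^2 + s^2) - ((J+1+p)*(q*Λ^2) + 2*q*Λ*s - (J-p)*s^2)) := by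
      rw [h2]; exact sq_nonneg _
    exact nonneg_of_mul_nonneg_right h3 hf0
  -- the key algebraic identity
  have hid : (J+1)^2 * F' - J*(J+1)*F = (J+1+p)*(q*Λ^2) + 2*q*Λ*s - (J-p)*s^2 := by
    rw [hF', hF, hs, hq]
    field_simp
    ring
  have hlam0 : 0 ≤ lam' := by rw [hlam']; linarith
  have hstep : (J+1)^2 * F' ≤ (J*(J+1) + lam'*(1+2*p)) * F := by
    have h4 : lam' * (q*Λ^2 + s^2) ≤ lam' * ((1+2*p)*F) := mul_le_mul_of_nonneg_left hdisk hlam0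
    nlinarith [hpoint, hid]
  have hmaster := master_scalar hJ hp
  have h5 : (J*(J+1) + lam'*(1+2*p)) * F ≤ ((J+1)^2 * ((J+1)/J)^(2*p)) * F := by
    apply mul_le_mul_of_nonneg_right _ hF0.le
    rw [hlam']
    calc J*(J+1) + ((1+2*p)+R)/2*(1+2*p) = J*(J+1) + (1+2*p)*((1+2*p) + R)/2 := by ring
      _ ≤ _ := hmaster
  have h6 : (J+1)^2 * F' ≤ (J+1)^2 * (((J+1)/J)^(2*p) * F) := by
    calc (J+1)^2 * F' ≤ (J*(J+1) + lam'*(1+2*p)) * F := hstep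
      _ ≤ ((J+1)^2 * ((J+1)/J)^(2*p)) * F := h5
      _ = (J+1)^2 * (((J+1)/J)^(2*p) * F) := by ring
  exact le_of_mul_le_mul_left h6 (by positivity)

lemma final_step {p Λ T μ' B : ℝ} (hp : 0 < p) (hΛ : 0 ≤ Λ)
    (hQ : μ'^2 - 2*(1+p)*μ'*Λ + (1+2*p)*T ≤ 0)
    (hF : (1+p)*Λ^2 - T ≤ B) :
    p*μ'^2 ≤ (1+2*p)^2 * B := by
  nlinarith [sq_nonneg (p*Λ - (μ' - (1+p)*Λ)), sq_nonneg (μ' - (1+p)*Λ), hp.le,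
    mul_nonneg hp.le (sq_nonneg Λ)]


/-- Sequence-theoretic eigenvalue bound for complex submanifolds of `ℂPⁿ`:
if `(λ_i)_{i ≥ 1}` is a nondecreasing sequence of nonnegative reals with `λ₁ = 0`
satisfying, for every `j ≥ 1`, the El Soufi–Harrell–Ilias type inequality
`∑_{i=1}^{j} (λ_{j+1} − λᵢ)² ≤ (2/m) ∑_{i=1}^{j} (λ_{j+1} − λᵢ)(λᵢ + c_m)` with
`c_m = 2m(m+1)`, then `λ_{k+1} ≤ 2(m+1)(m+2) k^{1/m} − 2m(m+1)` for every `k ≥ 1`. -/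
theorem eigenvalue_bound_of_universal_inequality (m : ℕ) (hm : 0 < m)
    (lam : ℕ → ℝ)
    (hnonneg : ∀ i, 1 ≤ i → 0 ≤ lam i)
    (hmono : ∀ i j, 1 ≤ i → i ≤ j → lam i ≤ lam j)
    (hfirst : lam 1 = 0)
    (hrec : ∀ j, 1 ≤ j →
      ∑ i ∈ Finset.Icc 1 j, (lam (j + 1) - lam i) ^ 2 ≤
        (2 / (m : ℝ)) * ∑ i ∈ Finset.Icc 1 j,
          (lam (j + 1) - lam i) * (lam i + 2 * m * (m + 1))) :
    ∀ k : ℕ, 1 ≤ k →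
      lam (k + 1) ≤ 2 * ((m : ℝ) + 1) * ((m : ℝ) + 2) * (k : ℝ) ^ ((1 : ℝ) / m)
        - 2 * (m : ℝ) * ((m : ℝ) + 1) := by
  have hm0 : (0:ℝ) < m := by exact_mod_cast hm
  set c : ℝ := 2*m*(m+1) with hc
  have hc0 : (0:ℝ) < c := by positivity
  set p : ℝ := 1/m with hpdef
  have hp : 0 < p := by positivity
  set S1 : ℕ → ℝ := fun n => ∑ i ∈ Finset.Icc 1 n, (lam i + c) with hS1
  set S2 : ℕ → ℝ := fun n => ∑ i ∈ Finset.Icc 1 n, (lam i + c)^2 with hS2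
  set Fq : ℕ → ℝ := fun n => (1+p)*(S1 n/n)^2 - S2 n/n with hFq
  -- quadratic inequality
  have hQ : ∀ j:ℕ, 1 ≤ j → (lam (j+1) + c)^2
      - 2*(1+p)*(lam (j+1)+c)*(S1 j/j) + (1+2*p)*(S2 j/j) ≤ 0 := by
    intro j hj
    have hj0 : (0:ℝ) < j := by exact_mod_cast hj
    have cardj : ((Finset.Icc 1 j).card : ℝ) = j := by
      rw [Nat.card_Icc]; simp
    have e1 : ∑ i ∈ Finset.Icc 1 j, (lam (j + 1) - lam i) ^ 2
        = (j:ℝ)*(lam (j+1)+c)^2 - 2*(lam (j+1)+c)*(S1 j) + S2 j := by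
      rw [show (∑ i ∈ Finset.Icc 1 j, (lam (j + 1) - lam i) ^ 2)
          = ∑ i ∈ Finset.Icc 1 j, ((lam (j+1)+c)^2 - 2*(lam (j+1)+c)*(lam i + c)
            + (lam i + c)^2) from Finset.sum_congr rfl (fun i _ => by ring)]
      rw [Finset.sum_add_distrib, Finset.sum_sub_distrib, Finset.sum_const,
        ← Finset.mul_sum, nsmul_eq_mul, cardj, hS1, hS2]
    have e2 : ∑ i ∈ Finset.Icc 1 j, (lam (j + 1) - lam i) * (lam i + 2*(m:ℝ)*(m+1))
        = (lam (j+1)+c)*(S1 j) - S2 j := by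
      rw [show (∑ i ∈ Finset.Icc 1 j, (lam (j + 1) - lam i) * (lam i + 2*(m:ℝ)*(m+1)))
          = ∑ i ∈ Finset.Icc 1 j, ((lam (j+1)+c)*(lam i + c) - (lam i + c)^2)
          from Finset.sum_congr rfl (fun i _ => by rw [hc]; ring)]
      rw [Finset.sum_sub_distrib, ← Finset.mul_sum, hS1, hS2]
    have h := hrec j hj
    rw [e1, e2] at h
    have h2m : (2:ℝ)/m = 2*p := by rw [hpdef]; ring
    rw [h2m] at h
    have h7 : (j:ℝ)*((lam (j+1) + c)^2 - 2*(1+p)*(lam (j+1)+c)*(S1 j/j)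
        + (1+2*p)*(S2 j/j)) = (j:ℝ)*(lam (j+1)+c)^2 - 2*(1+p)*(lam (j+1)+c)*(S1 j)
        + (1+2*p)*(S2 j) := by
      field_simp
    have h8 : (j:ℝ)*((lam (j+1) + c)^2 - 2*(1+p)*(lam (j+1)+c)*(S1 j/j)
        + (1+2*p)*(S2 j/j)) ≤ 0 := by rw [h7]; linarith
    nlinarith [h8, hj0]
  -- Λ positivity
  have hΛ : ∀ j:ℕ, 1 ≤ j → c ≤ S1 j / j := by
    intro j hj
    have hj0 : (0:ℝ) < j := by exact_mod_cast hj
    have hb : ∀ i ∈ Finset.Icc 1 j, c ≤ lam i + c := by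
      intro i hi
      have : 1 ≤ i := (Finset.mem_Icc.1 hi).1
      have := hnonneg i this
      linarith
    have := Finset.card_nsmul_le_sum (Finset.Icc 1 j) _ c hb
    rw [nsmul_eq_mul, Nat.card_Icc] at this
    rw [le_div_iff₀ hj0]
    calc c * j = ((j + 1 - 1 : ℕ):ℝ) * c := by push_cast [Nat.add_sub_cancel]; ring
      _ ≤ S1 j := this
  -- growth of Fq
  have hgrow : ∀ j:ℕ, 1 ≤ j → Fq j ≤ (j:ℝ)^(2*p) * (p*c^2) := by
    intro j hj
    induction j with
    | zero => omega
    | succ n ih =>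
      rcases Nat.lt_or_ge n 1 with hn | hn
      · -- base case n = 0
        interval_cases n
        have hS11 : S1 1 = c := by
          rw [hS1]; simp [Finset.Icc_self, hfirst]
        have hS21 : S2 1 = c^2 := by
          rw [hS2]; simp [Finset.Icc_self, hfirst]
        have : Fq 1 = p*c^2 := by
          rw [hFq]; simp only [hS11, hS21]; push_cast; field_simp; ring
        rw [this]
        norm_num
      · -- inductive step
        have ihn := ih hn
        have hn0 : (0:ℝ) < n := by exact_mod_cast hn
        have hn1 : (1:ℝ) ≤ n := by exact_mod_cast hn
        have hΛn : 0 < S1 n / n := lt_of_lt_of_le hc0 (hΛ n hn)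
        have e1 : S1 (n+1) = S1 n + (lam (n+1) + c) := by
          rw [hS1]; exact Finset.sum_Icc_succ_top (by omega) _
        have e2 : S2 (n+1) = S2 n + (lam (n+1) + c)^2 := by
          rw [hS2]; exact Finset.sum_Icc_succ_top (by omega) _
        have hcast : ((n+1:ℕ):ℝ) = (n:ℝ)+1 := by push_cast; ring
        have hF' : Fq (n+1) = (1+p)*(((n:ℝ)*(S1 n/n)+(lam (n+1)+c))/((n:ℝ)+1))^2
            - ((n:ℝ)*(S2 n/n)+(lam (n+1)+c)^2)/((n:ℝ)+1) := by
          rw [hFq]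
          simp only [e1, e2, hcast]
          field_simp
        have hQn := hQ n hn
        have hrs := recursion_step hn1 hp hΛn hQn hF'
        have hFqn : Fq n = (1+p)*(S1 n/n)^2 - S2 n/n := by rw [hFq]
        rw [← hFqn] at hrs
        have hrp0 : (0:ℝ) ≤ (((n:ℝ)+1)/n)^(2*p) := Real.rpow_nonneg (by positivity) _
        calc Fq (n+1) ≤ (((n:ℝ)+1)/n)^(2*p) * Fq n := hrs
          _ ≤ (((n:ℝ)+1)/n)^(2*p) * ((n:ℝ)^(2*p) * (p*c^2)) :=
              mul_le_mul_of_nonneg_left ihn hrp0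
          _ = ((((n:ℝ)+1)/n)^(2*p) * (n:ℝ)^(2*p)) * (p*c^2) := by ring
          _ = ((n:ℝ)+1)^(2*p) * (p*c^2) := by
              rw [← Real.mul_rpow (by positivity) (by positivity),
                div_mul_cancel₀ _ (ne_of_gt hn0)]
          _ = ((n+1:ℕ):ℝ)^(2*p) * (p*c^2) := by rw [hcast]
  -- conclusion
  intro k hk
  have hk0 : (0:ℝ) < k := by exact_mod_cast hk
  have hQk := hQ k hk
  have hgk := hgrow k hk
  have hFqk : (1+p)*(S1 k/k)^2 - S2 k/k ≤ (k:ℝ)^(2*p) * (p*c^2) := by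
    rw [hFq] at hgk; exact hgk
  have hfs := final_step hp (le_of_lt (lt_of_lt_of_le hc0 (hΛ k hk))) hQk hFqk
  -- p*(lam (k+1)+c)^2 ≤ (1+2p)^2 * ((k:ℝ)^(2*p)*(p*c^2))
  have hμ2 : (lam (k+1)+c)^2 ≤ (1+2*p)^2 * (k:ℝ)^(2*p) * c^2 := by
    have h9 : p*(lam (k+1)+c)^2 ≤ p*((1+2*p)^2 * (k:ℝ)^(2*p) * c^2) := by
      calc p*(lam (k+1)+c)^2 ≤ (1+2*p)^2 * ((k:ℝ)^(2*p)*(p*c^2)) := hfs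
        _ = p*((1+2*p)^2 * (k:ℝ)^(2*p) * c^2) := by ring
    exact le_of_mul_le_mul_left h9 hp
  have h2p : (k:ℝ)^(2*p) = ((k:ℝ)^p)^2 := by
    rw [← Real.rpow_natCast ((k:ℝ)^p) 2, ← Real.rpow_mul hk0.le]
    norm_num [mul_comm]
  have hZ0 : 0 ≤ (1+2*p)*c*(k:ℝ)^p := by positivity
  have hμ0 : 0 ≤ lam (k+1) + c := by
    have := hnonneg (k+1) (by omega); linarith
  have hZ2 : ((1+2*p)*c*(k:ℝ)^p)^2 = (1+2*p)^2 * (k:ℝ)^(2*p) * c^2 := by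
    rw [h2p]; ring
  have hμZ : lam (k+1) + c ≤ (1+2*p)*c*(k:ℝ)^p := by
    nlinarith [hμ2, hZ2, hμ0, hZ0]
  have hconst : (1+2*p)*c = 2*((m:ℝ)+1)*((m:ℝ)+2) := by
    rw [hpdef, hc]
    field_simp
  have hkp : (k:ℝ)^p = (k:ℝ)^((1:ℝ)/m) := by rw [hpdef]
  rw [← hkp, ← hconst]
  linarith [hμZ]
end

section
/- Let m be a positive integer and set c_m := 2m(m+1). Let (λ_i)_{i ≥ 1} be a nondecreasing sequence of nonnegative real numbers, and suppose that for every positive integer j one has ∑_{i=1}^{j} (λ_{j+1} − λᵢ)² ≤ (2/m) ∑_{i=1}^{j} (λ_{j+1} − λᵢ)(λᵢ + c_m). Then for every positive integer k, λ_{k+1} ≤ (1 + 2/m)(λ₁ + c_m) · k^{1/m} − c_m. -/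
open Finset

/-- Padé-type bound: for `0 < e ≤ 1` and `0 < x < 1`,
`(1+e*x)/(1-e*x) ≤ ((1+x)/(1-x))^e`. Proved via convexity of
`y ↦ log (1+y) - log (1-y)` on `[0, x]`. -/
private lemma cy_pade {x e : ℝ} (hx0 : 0 < x) (hx1 : x < 1) (he0 : 0 < e) (he1 : e ≤ 1) :
    (1 + e * x) / (1 - e * x) ≤ ((1 + x) / (1 - x)) ^ e := by
  have hex : e * x < 1 := by nlinarith
  have hex0 : 0 < e * x := mul_pos he0 hx0
  have h1 : (0:ℝ) < 1 - e * x := by linarith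
  have h2 : (0:ℝ) < 1 + e * x := by linarith
  have h3 : (0:ℝ) < 1 - x := by linarith
  have h4 : (0:ℝ) < 1 + x := by linarith
  set f : ℝ → ℝ := fun y => Real.log (1 + y) - Real.log (1 - y) with hf
  have hconv : ConvexOn ℝ (Set.Icc 0 x) f := by
    apply convexOn_of_hasDerivWithinAt2_nonneg (convex_Icc 0 x)
      (f' := fun y => (1 + y)⁻¹ + (1 - y)⁻¹)
      (f'' := fun y => -(1 / (1 + y) ^ 2) + 1 / (1 - y) ^ 2)
    · apply ContinuousOn.sub
      · apply ContinuousOn.log (by fun_prop)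
        intro y hy
        simp only [Set.mem_Icc] at hy
        nlinarith [hy.1, hy.2]
      · apply ContinuousOn.log (by fun_prop)
        intro y hy
        simp only [Set.mem_Icc] at hy
        nlinarith [hy.1, hy.2]
    · intro y hy
      rw [interior_Icc] at hy
      obtain ⟨hy0, hyx⟩ := hy
      have hy1 : (0:ℝ) < 1 + y := by linarith
      have hy2 : (0:ℝ) < 1 - y := by nlinarith
      have d1 : HasDerivAt (fun y : ℝ => Real.log (1 + y)) ((1 + y)⁻¹) y := by
        have h := ((hasDerivAt_id y).const_add 1).log hy1.ne'
        simp only [id_eq] at h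
        convert h using 1
        rw [one_div]
      have d2 : HasDerivAt (fun y : ℝ => Real.log (1 - y)) (-(1 - y)⁻¹) y := by
        have hne : (1 + -y) ≠ 0 := by intro hc; nlinarith
        have h := (((hasDerivAt_id y).neg).const_add 1).log (by simp only [id_eq, Pi.neg_apply]; exact hne)
        simp only [id_eq, Pi.neg_apply] at h
        have heq : (fun z : ℝ => Real.log (1 + -z)) = (fun z : ℝ => Real.log (1 - z)) := by
          funext z; rw [sub_eq_add_neg]
        rw [heq] at h
        refine h.congr_deriv ?_
        rw [show (1:ℝ) + -y = 1 - y by ring]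
        rw [neg_div, one_div]
      have h3 := (d1.sub d2).hasDerivWithinAt (s := interior (Set.Icc 0 x))
      exact h3.congr_deriv (by ring)
    · intro y hy
      rw [interior_Icc] at hy
      obtain ⟨hy0, hyx⟩ := hy
      have hy1 : (0:ℝ) < 1 + y := by linarith
      have hy2 : (0:ℝ) < 1 - y := by nlinarith
      have d1 : HasDerivAt (fun y : ℝ => (1 + y)⁻¹) (-(1 / (1 + y) ^ 2)) y := by
        have h := ((hasDerivAt_id y).const_add 1).inv hy1.ne'
        simp only [id_eq] at h
        exact h.congr_deriv (by ring)
      have d2 : HasDerivAt (fun y : ℝ => (1 - y)⁻¹) (1 / (1 - y) ^ 2) y := by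
        have hne : (1 + -y) ≠ 0 := by intro hc; nlinarith
        have h := (((hasDerivAt_id y).neg).const_add 1).inv (by simp only [id_eq, Pi.neg_apply]; exact hne)
        simp only [id_eq, Pi.neg_apply, Pi.inv_def] at h
        have heq : (fun z : ℝ => (1 + -z)⁻¹) = (fun z : ℝ => (1 - z)⁻¹) := by
          funext z; rw [sub_eq_add_neg]
        rw [heq] at h
        refine h.congr_deriv ?_
        rw [show (1:ℝ) + -y = 1 - y by ring]
        ring
      exact ((d1.add d2).hasDerivWithinAt)
    · intro y hy
      rw [interior_Icc] at hy
      obtain ⟨hy0, hyx⟩ := hy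
      have hy1 : (0:ℝ) < 1 + y := by linarith
      have hy2 : (0:ℝ) < 1 - y := by nlinarith
      have hle : (1 - y) ^ 2 ≤ (1 + y) ^ 2 := by nlinarith
      have h5 : 1 / (1 + y) ^ 2 ≤ 1 / (1 - y) ^ 2 :=
        one_div_le_one_div_of_le (by positivity) hle
      linarith
  have hmem0 : (0:ℝ) ∈ Set.Icc 0 x := by constructor <;> linarith
  have hmemx : x ∈ Set.Icc 0 x := by constructor <;> linarith
  have hc := hconv.2 hmem0 hmemx (by linarith : (0:ℝ) ≤ 1 - e) he0.le (by ring)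
  have hf0 : f 0 = 0 := by simp [hf]
  have hfx : f (e * x) ≤ e * f x := by
    have h' : f ((1 - e) * 0 + e * x) ≤ (1 - e) * f 0 + e * f x := by
      simpa [smul_eq_mul] using hc
    rw [hf0] at h'
    simpa using h'
  have hlhs : (1 + e * x) / (1 - e * x) = Real.exp (f (e * x)) := by
    simp only [hf]
    rw [Real.exp_sub, Real.exp_log h2, Real.exp_log h1]
  have hrhs : ((1 + x) / (1 - x)) ^ e = Real.exp (e * f x) := by
    rw [Real.rpow_def_of_pos (by positivity), Real.log_div h4.ne' h3.ne', hf]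
    simp only
    rw [mul_comm]
  rw [hlhs, hrhs]
  exact Real.exp_le_exp.mpr hfx

set_option maxHeartbeats 2000000 in
/-- Key Cheng–Yang recursion step, case `0 < e ≤ 1`. -/
private lemma cy_rec {K e s t u : ℝ} (hK : 1 ≤ K) (he0 : 0 < e) (he1 : e ≤ 1)
    (H1 : K * u ^ 2 - (2 + e) * s * u + (1 + e) * t ≤ 0) :
    (2 * K + 1 - e) * (K ^ 2 * ((2 + e) * (s + u) ^ 2 - 2 * (K + 1) * (t + u ^ 2))) ≤
      (2 * K + 1 + e) * ((K + 1) ^ 2 * ((2 + e) * s ^ 2 - 2 * K * t)) := by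
  have hK0 : (0:ℝ) < K := by linarith
  have hA : (0:ℝ) < 2*K^2 + K^2*e + K^2*e^3 + 8*K^3 + 4*K^3*e - 4*K^3*e^2 + 8*K^4 + 8*K^4*e := by
    have t1 : 0 < K^2*e := mul_pos (pow_pos hK0 2) he0
    have t2 : 0 < K^2*e^3 := mul_pos (pow_pos hK0 2) (pow_pos he0 3)
    have t3 : 0 ≤ K^3*e*(1-e) :=
      mul_nonneg (mul_nonneg (pow_pos hK0 3).le he0.le) (by linarith)
    have t4 : 0 < K^4*e := mul_pos (pow_pos hK0 4) he0
    nlinarith [pow_pos hK0 2, pow_pos hK0 3, pow_pos hK0 4, t1, t2, t3, t4]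
  have key : 0 ≤ ((4*(2*K^2 + K^2*e + K^2*e^3 + 8*K^3 + 4*K^3*e - 4*K^3*e^2 + 8*K^4 + 8*K^4*e))*(1+e)) *
      ((2 * K + 1 + e) * ((K + 1) ^ 2 * ((2 + e) * s ^ 2 - 2 * K * t)) -
       (2 * K + 1 - e) * (K ^ 2 * ((2 + e) * (s + u) ^ 2 - 2 * (K + 1) * (t + u ^ 2)))) := by
    have h1 : 0 ≤ ((4*(2*K^2 + K^2*e + K^2*e^3 + 8*K^3 + 4*K^3*e - 4*K^3*e^2 + 8*K^4 + 8*K^4*e))*(2*K*(K+1)*(2*K+1)*(1+e))) *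
        (-(K * u ^ 2 - (2 + e) * s * u + (1 + e) * t)) := by
      refine mul_nonneg (mul_nonneg (by linarith) ?_) (by linarith)
      have := mul_pos (mul_pos (mul_pos (by linarith : (0:ℝ) < 2*K)
        (by linarith : (0:ℝ) < K+1)) (by linarith : (0:ℝ) < 2*K+1))
        (by linarith : (0:ℝ) < 1+e)
      linarith
    have h2 : 0 ≤ (2*(2*K^2 + K^2*e + K^2*e^3 + 8*K^3 + 4*K^3*e - 4*K^3*e^2 + 8*K^4 + 8*K^4*e)*u
        - (4*K + 6*K*e + 2*K*e^2 + 16*K^2 + 20*K^2*e + 2*K^2*e^2 - 2*K^2*e^3 + 16*K^3 + 24*K^3*e + 8*K^3*e^2)*s)^2 :=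
      sq_nonneg _
    have h3 : 0 ≤ (4*K^2*(K+1)^2*e^3*(1+e)^2*(2+e))*s^2 := by positivity
    linarith [h1, h2, h3]
  have hpos : (0:ℝ) < (4*(2*K^2 + K^2*e + K^2*e^3 + 8*K^3 + 4*K^3*e - 4*K^3*e^2 + 8*K^4 + 8*K^4*e))*(1+e) := by
    have : (0:ℝ) < 1 + e := by linarith
    nlinarith [hA, this, mul_pos hA this]
  linarith [(mul_nonneg_iff_of_pos_left hpos).mp key]

set_option maxHeartbeats 2000000 in
/-- Key Cheng–Yang recursion step, case `e = 2` (i.e. `m = 1`). -/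
private lemma cy_rec2 {K s t u : ℝ} (hK : 1 ≤ K)
    (H1 : K * u ^ 2 - 4 * s * u + 3 * t ≤ 0) :
    K ^ 4 * (4 * (s + u) ^ 2 - 2 * (K + 1) * (t + u ^ 2)) ≤
      (K + 1) ^ 4 * (4 * s ^ 2 - 2 * K * t) := by
  have hK0 : (0:ℝ) < K := by linarith
  have key : 0 ≤ ((4*(2*K^2 + 8*K^3 + 6*K^4 + 12*K^5))*3) *
      ((K + 1) ^ 4 * (4 * s ^ 2 - 2 * K * t) -
        K ^ 4 * (4 * (s + u) ^ 2 - 2 * (K + 1) * (t + u ^ 2))) := by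
    have h1 : 0 ≤ ((4*(2*K^2 + 8*K^3 + 6*K^4 + 12*K^5))*(2*K*(K+1)*((K+1)^3 - K^3))) *
        (-(K * u ^ 2 - 4 * s * u + 3 * t)) := by
      refine mul_nonneg (mul_nonneg (by positivity) ?_) (by linarith)
      have := mul_pos (mul_pos (by linarith : (0:ℝ) < 2*K) (by linarith : (0:ℝ) < K+1))
        (by nlinarith : (0:ℝ) < (K+1)^3 - K^3)
      linarith
    have h2 : 0 ≤ (2*(2*K^2 + 8*K^3 + 6*K^4 + 12*K^5)*u - (8*K + 32*K^2 + 48*K^3 + 48*K^4)*s)^2 :=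
      sq_nonneg _
    have h3 : 0 ≤ (32*K^2 + 256*K^3 + 608*K^4 + 576*K^5 + 192*K^6)*s^2 := by positivity
    linarith [h1, h2, h3]
  have hpos : (0:ℝ) < (4*(2*K^2 + 8*K^3 + 6*K^4 + 12*K^5))*3 := by positivity
  linarith [(mul_nonneg_iff_of_pos_left hpos).mp key]

/-- Abstract Cheng–Yang sequence bound for the shifted sequence `μ`. -/
private lemma cy_mu_bound (m : ℕ) (hm : 0 < m) (μ : ℕ → ℝ)
    (hpos : ∀ i, 1 ≤ i → 0 ≤ μ i)
    (H : ∀ j : ℕ, 1 ≤ j →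
      (j : ℝ) * (μ (j + 1)) ^ 2 - (2 + 2 / (m : ℝ)) * (∑ i ∈ Icc 1 j, μ i) * (μ (j + 1))
        + (1 + 2 / (m : ℝ)) * (∑ i ∈ Icc 1 j, (μ i) ^ 2) ≤ 0) :
    ∀ k : ℕ, 1 ≤ k → μ (k + 1) ≤ (1 + 2 / (m : ℝ)) * μ 1 * (k : ℝ) ^ ((1 : ℝ) / m) := by
  have hm1 : (1:ℝ) ≤ (m:ℝ) := by exact_mod_cast hm
  have hmpos : (0:ℝ) < (m:ℝ) := by linarith
  set e : ℝ := 2 / (m:ℝ) with hedef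
  have he0 : 0 < e := by positivity
  set S1 : ℕ → ℝ := fun j => ∑ i ∈ Icc 1 j, μ i with hS1def
  set S2 : ℕ → ℝ := fun j => ∑ i ∈ Icc 1 j, (μ i) ^ 2 with hS2def
  set g : ℕ → ℝ := fun j => (2 + e) * (S1 j) ^ 2 - 2 * (j:ℝ) * (S2 j) with hgdef
  have hS1succ : ∀ j : ℕ, S1 (j + 1) = S1 j + μ (j + 1) := by
    intro j
    simp only [hS1def]
    exact Finset.sum_Icc_succ_top (by omega) _
  have hS2succ : ∀ j : ℕ, S2 (j + 1) = S2 j + (μ (j + 1)) ^ 2 := by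
    intro j
    simp only [hS2def]
    exact Finset.sum_Icc_succ_top (by omega) _
  have hinv : ∀ k : ℕ, 1 ≤ k → g k ≤ e * (μ 1) ^ 2 * (k:ℝ) ^ 2 * (k:ℝ) ^ e := by
    intro k hk
    induction k, hk using Nat.le_induction with
    | base =>
      have hg1 : g 1 = e * (μ 1) ^ 2 := by
        simp only [hgdef, hS1def, hS2def, Finset.Icc_self, Finset.sum_singleton]
        push_cast
        ring
      rw [hg1]
      push_cast
      rw [Real.one_rpow]
      norm_num
    | succ n hn ih =>
      have Hn := H n hn
      have hN1 : (1:ℝ) ≤ (n:ℝ) := by exact_mod_cast hn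
      have hN0 : (0:ℝ) < (n:ℝ) := by linarith
      have hgn1 : g (n + 1) = (2 + e) * (S1 n + μ (n+1)) ^ 2
          - 2 * ((n:ℝ) + 1) * (S2 n + (μ (n+1)) ^ 2) := by
        simp only [hgdef]
        rw [hS1succ n, hS2succ n]
        push_cast
        ring
      have hgn : g n = (2 + e) * (S1 n) ^ 2 - 2 * (n:ℝ) * (S2 n) := by
        simp only [hgdef]
      have hcast : ((n+1 : ℕ) : ℝ) = (n:ℝ) + 1 := by push_cast; ring
      rcases Nat.lt_or_ge m 2 with hm2 | hm2
      · -- m = 1, e = 2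
        have hmeq : m = 1 := by omega
        have hee : e = 2 := by rw [hedef, hmeq]; norm_num
        have hrpow2 : ∀ x : ℝ, 0 ≤ x → x ^ e = x ^ 2 := by
          intro x hx
          rw [hee, show (2:ℝ) = ((2:ℕ):ℝ) by norm_num, Real.rpow_natCast]
        have Hn' : (n:ℝ) * (μ (n+1)) ^ 2 - 4 * (S1 n) * (μ (n+1)) + 3 * (S2 n) ≤ 0 := by
          rw [hee] at Hn
          norm_num at Hn
          linarith
        have hrec := cy_rec2 (K := (n:ℝ)) (s := S1 n) (t := S2 n) (u := μ (n+1)) hN1 Hn'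
        have hIH : g n ≤ e * (μ 1) ^ 2 * (n:ℝ) ^ 2 * (n:ℝ) ^ 2 := by
          have := ih
          rwa [hrpow2 _ hN0.le] at this
        have step : (n:ℝ)^4 * g (n+1) ≤ (n:ℝ)^4 * (e * (μ 1)^2 * ((n:ℝ)+1)^2 * ((n:ℝ)+1)^2) := by
          calc (n:ℝ)^4 * g (n+1)
              = (n:ℝ)^4 * (4 * (S1 n + μ (n+1)) ^ 2 - 2 * ((n:ℝ) + 1) * (S2 n + (μ (n+1)) ^ 2)) := by
                rw [hgn1, hee]; norm_num
            _ ≤ ((n:ℝ)+1)^4 * (4 * (S1 n) ^ 2 - 2 * (n:ℝ) * (S2 n)) := hrec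
            _ = ((n:ℝ)+1)^4 * g n := by rw [hgn, hee]; norm_num
            _ ≤ ((n:ℝ)+1)^4 * (e * (μ 1) ^ 2 * (n:ℝ) ^ 2 * (n:ℝ) ^ 2) :=
                mul_le_mul_of_nonneg_left hIH (by positivity)
            _ = (n:ℝ)^4 * (e * (μ 1)^2 * ((n:ℝ)+1)^2 * ((n:ℝ)+1)^2) := by ring
        have hfinal := le_of_mul_le_mul_left step (by positivity : (0:ℝ) < (n:ℝ)^4)
        rw [hcast, hrpow2 _ (by positivity : (0:ℝ) ≤ (n:ℝ)+1)]
        exact hfinal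
      · -- m ≥ 2, e ≤ 1
        have he1 : e ≤ 1 := by
          rw [hedef, div_le_one hmpos]
          exact_mod_cast hm2
        have hrec := cy_rec (K := (n:ℝ)) (s := S1 n) (t := S2 n) (u := μ (n+1)) hN1 he0 he1 Hn
        have h2N : (0:ℝ) < 2*(n:ℝ)+1 := by linarith
        have h2Ne : (0:ℝ) < 2*(n:ℝ)+1-e := by linarith
        -- Padé comparison
        have hpade : (2*(n:ℝ)+1+e) * (n:ℝ)^e ≤ (2*(n:ℝ)+1-e) * ((n:ℝ)+1)^e := by
          have hx0 : (0:ℝ) < 1/(2*(n:ℝ)+1) := by positivity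
          have hx1 : 1/(2*(n:ℝ)+1) < 1 := by rw [div_lt_one h2N]; linarith
          have hp := cy_pade hx0 hx1 he0 he1
          have hden1 : (0:ℝ) < 1 - e*(1/(2*(n:ℝ)+1)) := by
            rw [lt_sub_iff_add_lt]
            have : e*(1/(2*(n:ℝ)+1)) < 1 := by
              rw [mul_one_div, div_lt_one h2N]
              linarith
            linarith
          have hden2 : (0:ℝ) < 1 - 1/(2*(n:ℝ)+1) := by
            rw [lt_sub_iff_add_lt]
            have : 1/(2*(n:ℝ)+1) < 1 := by
              rw [div_lt_one h2N]
              linarith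
            linarith
          have hL : (1 + e*(1/(2*(n:ℝ)+1)))/(1 - e*(1/(2*(n:ℝ)+1)))
              = (2*(n:ℝ)+1+e)/(2*(n:ℝ)+1-e) := by
            rw [div_eq_div_iff hden1.ne' h2Ne.ne']
            field_simp
            try ring
          have hR : (1 + 1/(2*(n:ℝ)+1))/(1 - 1/(2*(n:ℝ)+1)) = ((n:ℝ)+1)/(n:ℝ) := by
            rw [div_eq_div_iff hden2.ne' hN0.ne']
            field_simp
            try ring
          rw [hL, hR] at hp
          rw [Real.div_rpow (by linarith) hN0.le] at hp
          have hNe : (0:ℝ) < (n:ℝ)^e := Real.rpow_pos_of_pos hN0 e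
          rw [div_le_div_iff₀ h2Ne hNe] at hp
          linarith
        have step : ((2*(n:ℝ)+1-e) * (n:ℝ)^2) * g (n+1)
            ≤ ((2*(n:ℝ)+1-e) * (n:ℝ)^2) * (e * (μ 1)^2 * ((n:ℝ)+1)^2 * ((n:ℝ)+1)^e) := by
          calc ((2*(n:ℝ)+1-e) * (n:ℝ)^2) * g (n+1)
              = (2*(n:ℝ)+1-e) * ((n:ℝ)^2 * ((2 + e) * (S1 n + μ (n+1)) ^ 2
                  - 2 * ((n:ℝ) + 1) * (S2 n + (μ (n+1)) ^ 2))) := by rw [hgn1]; ring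
            _ ≤ (2*(n:ℝ)+1+e) * (((n:ℝ)+1)^2 * ((2 + e) * (S1 n) ^ 2 - 2 * (n:ℝ) * (S2 n))) := hrec
            _ = (2*(n:ℝ)+1+e) * (((n:ℝ)+1)^2 * g n) := by rw [hgn]
            _ ≤ (2*(n:ℝ)+1+e) * (((n:ℝ)+1)^2 * (e * (μ 1) ^ 2 * (n:ℝ) ^ 2 * (n:ℝ) ^ e)) :=
                mul_le_mul_of_nonneg_left
                  (mul_le_mul_of_nonneg_left ih (by positivity)) (by linarith)
            _ = (((n:ℝ)+1)^2 * (e * (μ 1)^2 * (n:ℝ)^2)) * ((2*(n:ℝ)+1+e) * (n:ℝ)^e) := by ring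
            _ ≤ (((n:ℝ)+1)^2 * (e * (μ 1)^2 * (n:ℝ)^2)) * ((2*(n:ℝ)+1-e) * ((n:ℝ)+1)^e) := by
                apply mul_le_mul_of_nonneg_left hpade
                positivity
            _ = ((2*(n:ℝ)+1-e) * (n:ℝ)^2) * (e * (μ 1)^2 * ((n:ℝ)+1)^2 * ((n:ℝ)+1)^e) := by ring
        have hposL : (0:ℝ) < (2*(n:ℝ)+1-e) * (n:ℝ)^2 := by positivity
        have hfinal := le_of_mul_le_mul_left step hposL
        rw [hcast]
        exact hfinal
  -- final step
  intro k hk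
  have Hk := H k hk
  have hgk := hinv k hk
  have hK1 : (1:ℝ) ≤ (k:ℝ) := by exact_mod_cast hk
  have hK0 : (0:ℝ) < (k:ℝ) := by linarith
  have hu0 : 0 ≤ μ (k+1) := hpos (k+1) (by omega)
  have hgkeq : g k = (2 + e) * (S1 k) ^ 2 - 2 * (k:ℝ) * (S2 k) := by simp only [hgdef]
  have hfin : e * (k:ℝ)^2 * (μ (k+1))^2 ≤ (1+e)^2 * g k := by
    rw [hgkeq]
    have h1 : 0 ≤ (2*(1+e)*(k:ℝ)) *
        (-((k:ℝ) * (μ (k + 1)) ^ 2 - (2 + e) * (S1 k) * (μ (k + 1)) + (1 + e) * (S2 k))) := by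
      apply mul_nonneg (by positivity) (by linarith)
    nlinarith [sq_nonneg ((k:ℝ) * μ (k+1) - (1+e) * S1 k), h1]
  have hR0 : 0 ≤ (1 + e) * μ 1 * (k:ℝ) ^ ((1:ℝ)/m) := by
    have := hpos 1 le_rfl
    positivity
  have hke : ((k:ℝ) ^ ((1:ℝ)/(m:ℝ)))^(2:ℕ) = (k:ℝ) ^ e := by
    rw [← Real.rpow_natCast ((k:ℝ) ^ ((1:ℝ)/(m:ℝ))) 2, ← Real.rpow_mul hK0.le]
    rw [hedef]
    congr 1
    push_cast
    ring
  have hsq : (μ (k+1))^2 ≤ ((1 + e) * μ 1 * (k:ℝ) ^ ((1:ℝ)/m))^2 := by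
    have expand : ((1 + e) * μ 1 * (k:ℝ) ^ ((1:ℝ)/m))^2 = (1+e)^2 * (μ 1)^2 * (k:ℝ)^e := by
      rw [mul_pow, mul_pow, hke]
    rw [expand]
    have hek2 : (0:ℝ) < e * (k:ℝ)^2 := by positivity
    have chain : e * (k:ℝ)^2 * (μ (k+1))^2 ≤ e * (k:ℝ)^2 * ((1+e)^2 * (μ 1)^2 * (k:ℝ)^e) := by
      calc e * (k:ℝ)^2 * (μ (k+1))^2 ≤ (1+e)^2 * g k := hfin
        _ ≤ (1+e)^2 * (e * (μ 1) ^ 2 * (k:ℝ) ^ 2 * (k:ℝ) ^ e) :=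
            mul_le_mul_of_nonneg_left hgk (by positivity)
        _ = e * (k:ℝ)^2 * ((1+e)^2 * (μ 1)^2 * (k:ℝ)^e) := by ring
    exact le_of_mul_le_mul_left chain hek2
  have := Real.sqrt_le_sqrt hsq
  rwa [Real.sqrt_sq hu0, Real.sqrt_sq hR0] at this

/-- Intermediate sequence-theoretic inequality: if `(λ_i)_{i ≥ 1}` is a nondecreasing
sequence of nonnegative reals satisfying, for every `j ≥ 1`,
`∑_{i=1}^{j} (λ_{j+1} − λᵢ)² ≤ (2/m) ∑_{i=1}^{j} (λ_{j+1} − λᵢ)(λᵢ + c_m)` with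
`c_m = 2m(m+1)`, then `λ_{k+1} ≤ (1 + 2/m)(λ₁ + c_m) k^{1/m} − c_m` for every `k ≥ 1`. -/
theorem eigenvalue_bound_shifted_chengYang (m : ℕ) (hm : 0 < m)
    (lam : ℕ → ℝ)
    (hnonneg : ∀ i, 1 ≤ i → 0 ≤ lam i)
    (hmono : ∀ i j, 1 ≤ i → i ≤ j → lam i ≤ lam j)
    (hrec : ∀ j, 1 ≤ j →
      ∑ i ∈ Finset.Icc 1 j, (lam (j + 1) - lam i) ^ 2 ≤
        (2 / (m : ℝ)) * ∑ i ∈ Finset.Icc 1 j,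
          (lam (j + 1) - lam i) * (lam i + 2 * m * (m + 1))) :
    ∀ k : ℕ, 1 ≤ k →
      lam (k + 1) ≤ (1 + 2 / (m : ℝ)) * (lam 1 + 2 * m * (m + 1)) * (k : ℝ) ^ ((1 : ℝ) / m)
        - 2 * (m : ℝ) * ((m : ℝ) + 1) := by
  have hm1 : (1:ℝ) ≤ (m:ℝ) := by exact_mod_cast hm
  set c : ℝ := 2 * (m:ℝ) * ((m:ℝ) + 1) with hcdef
  have hc0 : 0 < c := by rw [hcdef]; nlinarith
  set μ : ℕ → ℝ := fun i => lam i + c with hmudef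
  have hpos : ∀ i, 1 ≤ i → 0 ≤ μ i := by
    intro i hi
    have := hnonneg i hi
    simp only [hmudef]
    linarith
  have H : ∀ j : ℕ, 1 ≤ j →
      (j : ℝ) * (μ (j + 1)) ^ 2 - (2 + 2 / (m : ℝ)) * (∑ i ∈ Icc 1 j, μ i) * (μ (j + 1))
        + (1 + 2 / (m : ℝ)) * (∑ i ∈ Icc 1 j, (μ i) ^ 2) ≤ 0 := by
    intro j hj
    have h := hrec j hj
    have hcard : (Icc 1 j).card = j := by rw [Nat.card_Icc]; omega
    have hL : ∑ i ∈ Icc 1 j, (lam (j + 1) - lam i) ^ 2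
        = (j:ℝ) * (μ (j+1))^2 - 2 * (μ (j+1)) * (∑ i ∈ Icc 1 j, μ i)
          + (∑ i ∈ Icc 1 j, (μ i)^2) := by
      have hterm : ∀ i ∈ Icc 1 j, (lam (j + 1) - lam i) ^ 2
          = (μ (j+1))^2 - 2 * (μ (j+1)) * (μ i) + (μ i)^2 := by
        intro i _
        simp only [hmudef]
        ring
      rw [Finset.sum_congr rfl hterm]
      rw [Finset.sum_add_distrib, Finset.sum_sub_distrib, Finset.sum_const, hcard,
        ← Finset.mul_sum]
      push_cast
      ring
    have hR : ∑ i ∈ Icc 1 j, (lam (j + 1) - lam i) * (lam i + c)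
        = (μ (j+1)) * (∑ i ∈ Icc 1 j, μ i) - (∑ i ∈ Icc 1 j, (μ i)^2) := by
      have hterm : ∀ i ∈ Icc 1 j, (lam (j + 1) - lam i) * (lam i + c)
          = (μ (j+1)) * (μ i) - (μ i)^2 := by
        intro i _
        simp only [hmudef]
        ring
      rw [Finset.sum_congr rfl hterm]
      rw [Finset.sum_sub_distrib, ← Finset.mul_sum]
    rw [hL, hR] at h
    linarith [h]
  intro k hk
  have hfin := cy_mu_bound m hm μ hpos H k hk
  simp only [hmudef] at hfin
  linarith
end
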